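/- For an index i, the extra short root transvections with the same index multiply according to the Heisenberg group operation: T_i(v₀, x)·T_i(w₀, y) = T_i((v₀, x) ∔ (w₀, y)) = T_i(v₀ + w₀, x + y + B₀(v₀, w₀)). -/

import Mathlib

open MulOpposite

/-- The index i ↦ −i on Θ = {1,…,n} ⊔ {−1,…,−n}. -/
def negIdx {n : ℕ} : Fin n ⊕ Fin n → Fin n ⊕ Fin n := Sum.elim Sum.inr Sum.inl

/-- ε_k = (1̄)⁻¹ for positive k and ε_k = −1 for negative k. -/
def eps {R : Type*} [Ring R] (e : Rˣ) {n : ℕ} : Fin n ⊕ Fin n → R :=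
  Sum.elim (fun _ => (↑e⁻¹ : R)) (fun _ => (-1 : R))

/-- The elementary short root transvection T_{ij}(x). -/
def Tshort {R : Type*} [Ring R] {V₀ : Type*} {n : ℕ} (bar : R → R) (e : Rˣ)
    (i j : Fin n ⊕ Fin n) (x : R)
    (p : (Fin n ⊕ Fin n → R) × V₀) : (Fin n ⊕ Fin n → R) × V₀ :=
  (fun k => p.1 k + (if k = i then x * p.1 j else 0)
      + (if k = negIdx j then eps e (negIdx j) * bar x * eps e i * p.1 (negIdx i) else 0),
   p.2)

/-- The elementary extra short root transvection T_i(v₀, x) of the odd hyperbolic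
unitary group: e_k ↦ e_k for k ≠ −i, e_{−i} ↦ e_{−i} + e_i·εᵢ·x − v₀, and
w₀ ↦ w₀ − e_i·εᵢ·B₀(v₀, w₀) for w₀ ∈ V₀. -/
def Textra {R : Type*} [Ring R] {V₀ : Type*} [AddCommGroup V₀] [Module Rᵐᵒᵖ V₀]
    {n : ℕ} (e : Rˣ) (B₀ : V₀ → V₀ → R) (i : Fin n ⊕ Fin n) (v₀ : V₀) (x : R)
    (p : (Fin n ⊕ Fin n → R) × V₀) : (Fin n ⊕ Fin n → R) × V₀ :=
  (fun k => p.1 k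
      + (if k = i then eps e i * x * p.1 (negIdx i) - eps e i * B₀ v₀ p.2 else 0),
   p.2 - op (p.1 (negIdx i)) • v₀)

/-- extra short root transvections with the same index multiply
according to the Heisenberg group operation:
T_i(v₀,x)·T_i(w₀,y) = T_i(v₀ + w₀, x + y + B₀(v₀,w₀)). -/
theorem stmt17 {R : Type*} [Ring R] {V₀ : Type*} [AddCommGroup V₀] [Module Rᵐᵒᵖ V₀]
    (bar : R → R) (e : Rˣ) (he : (e : R) = bar 1)
    (hbar_add : ∀ x y : R, bar (x + y) = bar x + bar y)
    (hbar_mul : ∀ x y : R, bar (x * y) = bar y * (↑e⁻¹ : R) * bar x)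
    (hbar_bar : ∀ x : R, bar (bar x) = x)
    (B₀ : V₀ → V₀ → R)
    (hB_addl : ∀ u v w : V₀, B₀ (u + v) w = B₀ u w + B₀ v w)
    (hB_addr : ∀ u v w : V₀, B₀ u (v + w) = B₀ u v + B₀ u w)
    (hB_sesq : ∀ (v w : V₀) (x y : R),
      B₀ (op x • v) (op y • w) = bar x * (↑e⁻¹ : R) * B₀ v w * y)
    (hB_skew : ∀ v w : V₀, B₀ v w = - bar (B₀ w v))
    (L₀ : Set (V₀ × R))
    {n : ℕ} (i : Fin n ⊕ Fin n) (v₀ w₀ : V₀) (x y : R)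
    (hv : ((v₀, x) : V₀ × R) ∈ L₀) (hw : ((w₀, y) : V₀ × R) ∈ L₀) :
    ∀ p : (Fin n ⊕ Fin n → R) × V₀,
      Textra e B₀ i v₀ x (Textra e B₀ i w₀ y p)
        = Textra e B₀ i (v₀ + w₀) (x + y + B₀ v₀ w₀) p := by

  intro p
  have hne : negIdx i ≠ i := by cases i <;> simp [negIdx]
  have hsub : ∀ (v a b : V₀), B₀ v (a - b) = B₀ v a - B₀ v b := by
    intro v a b
    have h := hB_addr v (a - b) b
    rw [sub_add_cancel] at h
    rw [eq_sub_iff_add_eq, ← h]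
  have hsmul : ∀ (v w : V₀) (r : R), B₀ v (op r • w) = B₀ v w * r := by
    intro v w r
    have h := hB_sesq v w 1 r
    rw [op_one, one_smul, ← he] at h
    simpa [mul_assoc] using h
  unfold Textra
  refine Prod.ext ?_ ?_
  · funext k
    by_cases hk : k = i
    · simp only [hk, if_pos rfl, if_neg hne, hsub, hsmul, hB_addl, hB_addr]
      simp only [↓reduceIte, mul_add, add_mul, mul_sub, sub_mul, mul_assoc, sub_eq_add_neg, neg_add,
        mul_zero, neg_mul, mul_neg, neg_neg,
        zero_add, add_zero, add_assoc, add_comm, add_left_comm]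
    · simp [hk, if_neg hne]
  · simp only [if_neg hne, smul_add]
    abel
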